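/- Suppose h : X_A → X_B gives a continuous orbit equivalence with cocycle function c_2 on X_B, and suppose c_1 = 1 + b_1 − b_1∘σ_A (strong continuous orbit equivalence), with c_2 = 1 + b_2 − b_2∘σ_B. Then for the induced map Φ_h on cocycles, Φ_h(d^A)(y,φ) = d^B(y,φ) + b_2(y) − b_2(φ(y)) for all (y,φ) ∈ X_B × Γ_B; hence Φ_h([d^A]) = [d^B] in H^1(Γ_B,X_B;ℤ). -/

import Mathlib

/-- The one-sided topological Markov shift space of a `{0,1}`-matrix `A`. -/
abbrev MarkovShift {N : ℕ} (A : Fin N → Fin N → Bool) : Type :=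
  { x : ℕ → Fin N // ∀ n, A (x n) (x (n + 1)) = true }

/-- The one-sided shift map `σ_A`. -/
def shiftMap {N : ℕ} (A : Fin N → Fin N → Bool) : MarkovShift A → MarkovShift A :=
  fun x => ⟨fun n => x.1 (n + 1), fun n => x.2 (n + 1)⟩

/-- Irreducibility of the matrix `A`: any index is connected to any other by an admissible path. -/
def IsIrreducibleMatrix {N : ℕ} (A : Fin N → Fin N → Bool) : Prop :=
  ∀ i j : Fin N, ∃ n : ℕ, 0 < n ∧ ∃ p : ℕ → Fin N, p 0 = i ∧ p n = j ∧
    ∀ m < n, A (p m) (p (m + 1)) = true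

/-- `A` is a permutation matrix. -/
def IsPermutationMatrix {N : ℕ} (A : Fin N → Fin N → Bool) : Prop :=
  (∀ i, ∃! j, A i j = true) ∧ (∀ j, ∃! i, A i j = true)
/-- An element of the continuous full group together with a choice of orbit functions. -/
structure FullGroupElt {X : Type*} [TopologicalSpace X] (σ : X → X) where
  toHomeo : X ≃ₜ X
  k : X → ℕ
  l : X → ℕ
  cont_k : Continuous k
  cont_l : Continuous l
  orbit : ∀ x, σ^[k x] (toHomeo x) = σ^[l x] x

/-- Coordinates of iterated shift. -/
lemma shift_iter_coord {N : ℕ} (A : Fin N → Fin N → Bool) (n : ℕ) (x : MarkovShift A) (j : ℕ) :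
    ((shiftMap A)^[n] x).1 j = x.1 (j + n) := by
  induction n generalizing x j with
  | zero => rfl
  | succ n ih =>
    rw [Function.iterate_succ_apply, ih]
    rfl

/-- Key iteration lemma for continuous orbit equivalences. -/
lemma iterKey {X₁ X₂ : Type*} (σ₁ : X₁ → X₁) (σ₂ : X₂ → X₂) (H : X₁ → X₂)
    (k l : X₁ → ℕ) (b : X₁ → ℤ)
    (horb : ∀ x, σ₂^[k x] (H (σ₁ x)) = σ₂^[l x] (H x))
    (hc : ∀ x, (l x : ℤ) - (k x : ℤ) = 1 + b x - b (σ₁ x)) :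
    ∀ n x, ∃ K L : ℕ, σ₂^[K] (H (σ₁^[n] x)) = σ₂^[L] (H x) ∧
      (L : ℤ) - (K : ℤ) = n + b x - b (σ₁^[n] x) := by
  intro n
  induction n with
  | zero => intro x; exact ⟨0, 0, rfl, by simp⟩
  | succ n ih =>
    intro x
    obtain ⟨K, L, hKL, he⟩ := ih (σ₁ x)
    have comm : ∀ (a c : ℕ) (z : X₂), σ₂^[a] (σ₂^[c] z) = σ₂^[c] (σ₂^[a] z) := by
      intro a c z
      rw [← Function.iterate_add_apply, ← Function.iterate_add_apply, add_comm]
    refine ⟨K + k x, L + l x, ?_, ?_⟩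
    · calc σ₂^[K + k x] (H (σ₁^[n + 1] x))
          = σ₂^[k x] (σ₂^[K] (H (σ₁^[n] (σ₁ x)))) := by
            rw [add_comm K (k x), Function.iterate_add_apply, Function.iterate_succ_apply]
        _ = σ₂^[k x] (σ₂^[L] (H (σ₁ x))) := by rw [hKL]
        _ = σ₂^[L] (σ₂^[k x] (H (σ₁ x))) := comm _ _ _
        _ = σ₂^[L] (σ₂^[l x] (H x)) := by rw [horb]
        _ = σ₂^[L + l x] (H x) := (Function.iterate_add_apply _ _ _ _).symm
    · have h1 := hc x
      rw [Function.iterate_succ_apply]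
      push_cast
      linarith [he, h1]

/-- An admissible loop at `v` whose interior avoids `v`. -/
structure MLoop {M : ℕ} (B : Fin M → Fin M → Bool) (v : Fin M) where
  len : ℕ
  w : ℕ → Fin M
  len_pos : 0 < len
  w0 : w 0 = v
  wlen : w len = v
  adm : ∀ j < len, B (w j) (w (j + 1)) = true
  interior : ∀ j, 0 < j → j < len → w j ≠ v

/-- From a successor `a` of `v`, build a loop at `v` whose second symbol is `a`. -/
lemma loop_of_succ {M : ℕ} {B : Fin M → Fin M → Bool} (hirr : IsIrreducibleMatrix B)
    {v a : Fin M} (hBa : B v a = true) : ∃ P : MLoop B v, P.w 1 = a := by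
  obtain ⟨n, hn, p, hp0, hpn, hadm⟩ := hirr a v
  -- the path v, p 0, p 1, ..., p n  (ends at v)
  set P : ℕ → Fin M := fun j => if j = 0 then v else p (j - 1) with hP
  have hP0 : P 0 = v := by simp [hP]
  have hPn : P (n + 1) = v := by simp [hP, hpn]
  have hPadm : ∀ j < n + 1, B (P j) (P (j + 1)) = true := by
    intro j hj
    rcases Nat.eq_zero_or_pos j with h0 | h0
    · subst h0; simpa [hP, hp0] using hBa
    · have : P j = p (j - 1) := by simp [hP, Nat.pos_iff_ne_zero.mp h0]
      rw [this]
      have : P (j + 1) = p j := by simp [hP]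
      rw [this]
      have : j - 1 + 1 = j := Nat.succ_pred_eq_of_pos h0
      rw [← this] at hj ⊢
      exact hadm _ (by omega)
  -- truncate at the first return to v
  have hex : ∃ t, 0 < t ∧ t ≤ n + 1 ∧ P t = v := ⟨n + 1, by omega, le_refl _, hPn⟩
  classical
  set t := Nat.find hex with ht
  obtain ⟨htpos, htle, htv⟩ := Nat.find_spec hex
  have hmin : ∀ j, 0 < j → j < t → P j ≠ v := by
    intro j hj0 hjt hv
    exact Nat.find_min hex hjt ⟨hj0, by omega, hv⟩
  refine ⟨⟨t, P, htpos, hP0, htv, fun j hj => hPadm j (by omega), hmin⟩, ?_⟩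
  show P 1 = a
  rcases Nat.eq_or_lt_of_le htpos with h1 | h1
  · -- t = 1 : then P 1 = v; but P 1 = p 0 = a, so a = v and P 1 = a anyway
    have : P 1 = p 0 := by simp [hP]
    rw [this, hp0]
  · have : P 1 = p 0 := by simp [hP]
    rw [this, hp0]

/-- From a predecessor `a` of `v`, build a loop at `v` whose second-to-last symbol is `a`. -/
lemma loop_of_pred {M : ℕ} {B : Fin M → Fin M → Bool} (hirr : IsIrreducibleMatrix B)
    {v a : Fin M} (hBa : B a v = true) : ∃ P : MLoop B v, P.w (P.len - 1) = a := by
  obtain ⟨n, hn, p, hp0, hpn, hadm⟩ := hirr v a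
  -- the path p 0 = v, ..., p n = a, then v
  set P : ℕ → Fin M := fun j => if j ≤ n then p j else v with hP
  have hP0 : P 0 = v := by simp [hP, hp0]
  have hPn : P n = a := by simp [hP, hpn]
  have hPn1 : P (n + 1) = v := by simp [hP]
  have hPadm : ∀ j < n + 1, B (P j) (P (j + 1)) = true := by
    intro j hj
    rcases Nat.lt_or_ge j n with h0 | h0
    · have e1 : P j = p j := by simp [hP, le_of_lt h0]
      have e2 : P (j + 1) = p (j + 1) := by simp [hP, Nat.succ_le_of_lt h0]
      rw [e1, e2]; exact hadm j h0
    · have hjn : j = n := by omega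
      subst hjn
      rw [hPn, hPn1]; exact hBa
  -- truncate from the last visit to v before n + 1
  classical
  have hex : ∃ s, s ≤ n ∧ P s = v := ⟨0, Nat.zero_le _, hP0⟩
  set s := Nat.findGreatest (fun s => P s = v) n with hs
  have hsspec : P s = v := Nat.findGreatest_spec (P := fun s => P s = v) (Nat.zero_le _) hP0
  have hsle : s ≤ n := Nat.findGreatest_le n
  have hmax : ∀ j, s < j → j ≤ n → P j ≠ v := fun j h1 h2 =>
    Nat.findGreatest_is_greatest h1 h2
  refine ⟨⟨n + 1 - s, fun j => P (s + j), by omega, by simpa using hsspec, ?_, ?_, ?_⟩, ?_⟩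
  · show P (s + (n + 1 - s)) = v
    have : s + (n + 1 - s) = n + 1 := by omega
    rw [this, hPn1]
  · intro j hj
    have : s + j < n + 1 := by omega
    exact hPadm _ this
  · intro j hj0 hjlen
    have : s + j ≤ n := by omega
    exact hmax (s + j) (by omega) this
  · show P (s + (n + 1 - s - 1)) = a
    have : s + (n + 1 - s - 1) = n := by omega
    rw [this, hPn]

/-- Existence of two distinct loops at a common vertex. -/
lemma exists_two_loops {M : ℕ} {B : Fin M → Fin M → Bool} (hirr : IsIrreducibleMatrix B)
    (hnp : ¬ IsPermutationMatrix B) :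
    ∃ v : Fin M, ∃ P Q : MLoop B v,
      P.len = Q.len → ∃ d, 0 < d ∧ d < P.len ∧ P.w d ≠ Q.w d := by
  classical
  have hsucc : ∀ i : Fin M, ∃ j, B i j = true := by
    intro i
    obtain ⟨n, hn, p, hp0, hpn, hadm⟩ := hirr i i
    exact ⟨p 1, by rw [← hp0]; exact hadm 0 hn⟩
  have hpred : ∀ j : Fin M, ∃ i, B i j = true := by
    intro j
    obtain ⟨n, hn, p, hp0, hpn, hadm⟩ := hirr j j
    refine ⟨p (n - 1), ?_⟩
    have : n - 1 + 1 = n := Nat.succ_pred_eq_of_pos hn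
    have h := hadm (n - 1) (by omega)
    rw [this, hpn] at h
    exact h
  rw [IsPermutationMatrix, not_and_or] at hnp
  rcases hnp with hnp | hnp
  · push_neg at hnp
    obtain ⟨v, hv⟩ := hnp
    obtain ⟨a, ha⟩ := hsucc v
    rw [ExistsUnique] at hv
    push_neg at hv
    obtain ⟨b, hb, hab⟩ := hv a ha
    obtain ⟨P, hP⟩ := loop_of_succ hirr ha
    obtain ⟨Q, hQ⟩ := loop_of_succ hirr hb
    have hne : P.w 1 ≠ Q.w 1 := by rw [hP, hQ]; exact fun hh => hab hh.symm
    refine ⟨v, P, Q, fun hlen => ⟨1, Nat.one_pos, ?_, hne⟩⟩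
    by_contra hcon
    push_neg at hcon
    have h1 : P.len = 1 := by have := P.len_pos; omega
    have h2 : Q.len = 1 := by omega
    have ea := hP
    rw [← h1, P.wlen] at ea
    have eb := hQ
    rw [← h2, Q.wlen] at eb
    exact hab (eb.symm.trans ea)
  · push_neg at hnp
    obtain ⟨v, hv⟩ := hnp
    obtain ⟨a, ha⟩ := hpred v
    rw [ExistsUnique] at hv
    push_neg at hv
    obtain ⟨b, hb, hab⟩ := hv a ha
    obtain ⟨P, hP⟩ := loop_of_pred hirr ha
    obtain ⟨Q, hQ⟩ := loop_of_pred hirr hb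
    refine ⟨v, P, Q, fun hlen => ?_⟩
    have key : 1 < P.len := by
      by_contra hcon
      push_neg at hcon
      have h1 : P.len = 1 := by have := P.len_pos; omega
      have h2 : Q.len = 1 := by omega
      have ea := hP
      rw [h1] at ea
      norm_num at ea
      have eb := hQ
      rw [h2] at eb
      norm_num at eb
      rw [P.w0] at ea
      rw [Q.w0] at eb
      exact hab (eb.symm.trans ea)
    refine ⟨P.len - 1, by omega, by omega, ?_⟩
    have e2 := hQ
    rw [← hlen] at e2
    rw [hP, e2]
    exact fun hh => hab hh.symm

/-- Approximation by non-eventually-periodic points. -/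
lemma exists_aperiodic_approx {M : ℕ} {B : Fin M → Fin M → Bool} (hirr : IsIrreducibleMatrix B)
    (hnp : ¬ IsPermutationMatrix B) (y : MarkovShift B) (L : ℕ) :
    ∃ z : MarkovShift B, (∀ t ≤ L, z.1 t = y.1 t) ∧
      ∀ m n : ℕ, (shiftMap B)^[m] z = (shiftMap B)^[n] z → m = n := by
  classical
  obtain ⟨v, P, Q, hdiff⟩ := exists_two_loops hirr hnp
  obtain ⟨n₁, hn₁, p₁, hp₁0, hp₁n, hp₁adm⟩ := hirr (y.1 L) v
  set T := L + n₁ with hT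
  have hLT : L < T := by omega
  set S : ℕ → Prop := fun i => ∃ m, i = 2 ^ m with hS
  set blk : ℕ → MLoop B v := fun i => if S i then Q else P with hblkdef
  set start : ℕ → ℕ := fun i => T + ∑ j ∈ Finset.range i, (blk j).len with hstartdef
  have hstart0 : start 0 = T := by simp [hstartdef]
  have hstartsucc : ∀ i, start (i + 1) = start i + (blk i).len := by
    intro i
    simp [hstartdef, Finset.sum_range_succ, Nat.add_assoc]
  have hsmono : StrictMono start := by
    apply strictMono_nat_of_lt_succ
    intro i
    have := (blk i).len_pos
    rw [hstartsucc]; omega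
  have hge : ∀ i, T + i ≤ start i := by
    intro i
    induction i with
    | zero => simp [hstart0]
    | succ i ih => have := (blk i).len_pos; rw [hstartsucc]; omega
  have haux : ∀ i j, start i + j ≤ start (i + j) := by
    intro i j
    induction j with
    | zero => simp
    | succ j ih =>
      have h1 := (blk (i + j)).len_pos
      have h2 := hstartsucc (i + j)
      have h3 : i + (j + 1) = (i + j) + 1 := by omega
      rw [h3, h2]
      omega
  set idx : ℕ → ℕ := fun t => Nat.findGreatest (fun i => start i ≤ t) t with hidxdef
  have hidxval : ∀ i t, start i ≤ t → t < start (i + 1) → idx t = i := by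
    intro i t h1 h2
    have hit : i ≤ t := le_trans (by omega : i ≤ T + i) (le_trans (hge i) h1)
    have hle : i ≤ idx t := Nat.le_findGreatest hit h1
    have hge2 : idx t ≤ i := by
      by_contra hcon
      push_neg at hcon
      have h3 : start (idx t) ≤ t :=
        Nat.findGreatest_spec (P := fun i => start i ≤ t) hit h1
      have : start (i + 1) ≤ start (idx t) := hsmono.le_iff_le.mpr (by omega)
      omega
    omega
  have hoff : ∀ t, T ≤ t → start (idx t) ≤ t ∧ t < start (idx t + 1) := by
    intro t ht
    have h0 : start 0 ≤ t := by rw [hstart0]; exact ht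
    have h1 : start (idx t) ≤ t :=
      Nat.findGreatest_spec (P := fun i => start i ≤ t) (Nat.zero_le _) h0
    refine ⟨h1, ?_⟩
    by_contra hcon
    push_neg at hcon
    have hbound : idx t + 1 ≤ t := by
      have := hge (idx t + 1)
      omega
    exact (Nat.findGreatest_is_greatest (lt_add_one (idx t)) hbound) hcon
  set pre : ℕ → Fin M := fun t => if t ≤ L then y.1 t else p₁ (t - L) with hpredef
  set zf : ℕ → Fin M :=
    fun t => if t < T then pre t else (blk (idx t)).w (t - start (idx t)) with hzfdef
  have hblk : ∀ i o, o < (blk i).len → zf (start i + o) = (blk i).w o := by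
    intro i o ho
    have h1 : start i ≤ start i + o := by omega
    have h2 : start i + o < start (i + 1) := by rw [hstartsucc]; omega
    have hTle : T ≤ start i + o := le_trans (le_trans (by omega) (hge i)) h1
    have hidxi : idx (start i + o) = i := hidxval i _ h1 h2
    simp only [hzfdef]
    rw [if_neg (by omega), hidxi]
    congr 1
    omega
  have hnext : ∀ t, T ≤ t → ∃ i o, o < (blk i).len ∧
      zf t = (blk i).w o ∧ zf (t + 1) = (blk i).w (o + 1) := by
    intro t ht
    obtain ⟨h1, h2⟩ := hoff t ht
    set i := idx t
    set o := t - start i with hodef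
    have ho : o < (blk i).len := by
      have := hstartsucc i
      omega
    have heq : start i + o = t := by omega
    refine ⟨i, o, ho, by rw [← heq]; exact hblk i o ho, ?_⟩
    rcases Nat.lt_or_ge (o + 1) ((blk i).len) with hlt | hge'
    · have := hblk i (o + 1) hlt
      rw [show start i + (o + 1) = t + 1 by omega] at this
      exact this
    · have hoe : o + 1 = (blk i).len := by omega
      have ht1 : t + 1 = start (i + 1) := by rw [hstartsucc]; omega
      have := hblk (i + 1) 0 (blk (i + 1)).len_pos
      rw [Nat.add_zero] at this
      rw [ht1, this, (blk (i + 1)).w0, hoe, (blk i).wlen]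
  have hpre' : ∀ t, L ≤ t → t ≤ T → zf t = p₁ (t - L) := by
    intro t h1 h2
    rcases Nat.lt_or_ge t T with h3 | h3
    · simp only [hzfdef]
      rw [if_pos h3]
      simp only [hpredef]
      rcases Nat.eq_or_lt_of_le h1 with h4 | h4
      · rw [if_pos (le_of_eq h4.symm), ← h4, Nat.sub_self, hp₁0]
      · rw [if_neg (by omega)]
    · have htT : t = T := by omega
      subst htT
      have h0 : zf (start 0 + 0) = (blk 0).w 0 := hblk 0 0 (blk 0).len_pos
      rw [Nat.add_zero, hstart0] at h0
      rw [h0, (blk 0).w0, show T - L = n₁ by omega, hp₁n]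
  have hadm : ∀ t, B (zf t) (zf (t + 1)) = true := by
    intro t
    rcases Nat.lt_or_ge (t + 1) T with h1 | h1
    · rcases Nat.lt_or_ge t L with h2 | h2
      · simp only [hzfdef]
        rw [if_pos (by omega), if_pos h1]
        simp only [hpredef]
        rw [if_pos (by omega), if_pos (by omega)]
        exact y.2 t
      · have e1 := hpre' t h2 (by omega)
        have e2 := hpre' (t + 1) (by omega) (by omega)
        rw [e1, e2, show t + 1 - L = (t - L) + 1 by omega]
        exact hp₁adm (t - L) (by omega)
    · rcases Nat.lt_or_ge t T with h2 | h2
      · -- t = T - 1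
        have e1 := hpre' t (by omega) (by omega)
        have e2 := hpre' (t + 1) (by omega) (by omega)
        rw [e1, e2, show t + 1 - L = (t - L) + 1 by omega]
        exact hp₁adm (t - L) (by omega)
      · obtain ⟨i, o, ho, e1, e2⟩ := hnext t h2
        rw [e1, e2]
        exact (blk i).adm o ho
  have hvpos : ∀ t, T ≤ t → (zf t = v ↔ ∃ i, t = start i) := by
    intro t ht
    constructor
    · intro hv
      obtain ⟨h1, h2⟩ := hoff t ht
      set i := idx t
      set o := t - start i with hodef
      have ho : o < (blk i).len := by have := hstartsucc i; omega
      have heq : start i + o = t := by omega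
      have := hblk i o ho
      rw [heq] at this
      rcases Nat.eq_zero_or_pos o with h0 | h0
      · exact ⟨i, by omega⟩
      · exact absurd (by rw [← this, hv]) ((blk i).interior o h0 ho)
    · rintro ⟨i, rfl⟩
      have := hblk i 0 (blk i).len_pos
      rw [Nat.add_zero] at this
      rw [this, (blk i).w0]
  have hmark : ∀ t, T ≤ t →
      ((∀ j ≤ Q.len, zf (t + j) = Q.w j) ↔ ∃ i, t = start i ∧ S i) := by
    intro t ht
    constructor
    · intro H
      have h0 : zf t = v := by have := H 0 (Nat.zero_le _); rwa [Nat.add_zero, Q.w0] at this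
      obtain ⟨i, rfl⟩ := (hvpos t ht).mp h0
      refine ⟨i, rfl, ?_⟩
      by_contra hSi
      have hblki : blk i = P := by simp only [hblkdef]; rw [if_neg hSi]
      rcases lt_trichotomy P.len Q.len with hlen | hlen | hlen
      · have e1 : zf (start i + P.len) = v := by
          have : start i + P.len = start (i + 1) := by rw [hstartsucc, hblki]
          rw [this]
          exact (hvpos _ (le_trans (le_trans (by omega) (hge (i+1))) (le_refl _))).mpr ⟨i + 1, rfl⟩
        have e2 := H P.len (le_of_lt hlen)
        rw [e1] at e2
        exact (Q.interior P.len P.len_pos hlen) e2.symm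
      · obtain ⟨d, hd1, hd2, hd3⟩ := hdiff (by rw [hblki] at *; omega)
        have e1 : zf (start i + d) = P.w d := by
          have := hblk i d (by rw [hblki]; exact hd2)
          rwa [hblki] at this
        have e2 := H d (by omega)
        rw [e1] at e2
        exact hd3 e2
      · have e1 : zf (start i + Q.len) = P.w Q.len := by
          have := hblk i Q.len (by rw [hblki]; exact hlen)
          rwa [hblki] at this
        have e2 := H Q.len (le_refl _)
        rw [e1, Q.wlen] at e2
        exact (P.interior Q.len Q.len_pos hlen) e2
    · rintro ⟨i, rfl, hSi⟩
      have hblki : blk i = Q := by simp only [hblkdef]; rw [if_pos hSi]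
      intro j hj
      rcases Nat.lt_or_ge j Q.len with hlt | hge'
      · have := hblk i j (by rw [hblki]; exact hlt)
        rwa [hblki] at this
      · have hje : j = Q.len := by omega
        subst hje
        have h1 : start i + Q.len = start (i + 1) := by rw [hstartsucc, hblki]
        rw [h1]
        have := hblk (i + 1) 0 (blk (i + 1)).len_pos
        rw [Nat.add_zero] at this
        rw [this, (blk (i + 1)).w0, Q.wlen]
  -- assemble the point
  refine ⟨⟨zf, hadm⟩, ?_, ?_⟩
  · intro t htL
    simp only [hzfdef]
    rw [if_pos (by omega)]
    simp only [hpredef]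
    rw [if_pos htL]
  · -- aperiodicity
    have key : ∀ m n : ℕ, m < n →
        (shiftMap B)^[m] (⟨zf, hadm⟩ : MarkovShift B) = (shiftMap B)^[n] ⟨zf, hadm⟩ → False := by
      intro m n hmn heq
      set k := n - m with hk
      have hkpos : 0 < k := by omega
      have hcoord : ∀ j, zf (j + m) = zf (j + n) := by
        intro j
        have := congrArg (fun w => w.1 j) heq
        simpa [shift_iter_coord] using this
      have hshift : ∀ t, m ≤ t → zf (t + k) = zf t := by
        intro t ht
        have := hcoord (t - m)
        rw [show t - m + m = t by omega, show t - m + n = t + k by omega] at this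
        exact this.symm
      set Mk : ℕ → Prop := fun t => ∀ j ≤ Q.len, zf (t + j) = Q.w j with hMk
      have step : ∀ t, m ≤ t → Mk t → Mk (t + k) := by
        intro t ht hMkt j hj
        rw [show t + k + j = (t + j) + k by omega, hshift (t + j) (by omega)]
        exact hMkt j hj
      set i₀ := 2 ^ m with hi₀
      set t₀ := start i₀ with ht₀
      have hm2 : m ≤ i₀ := le_of_lt (Nat.lt_two_pow_self (n := m))
      have ht₀m : m ≤ t₀ := le_trans hm2 (le_trans (by omega : i₀ ≤ T + i₀) (hge i₀))
      have ht₀T : T ≤ t₀ := le_trans (by omega) (hge i₀)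
      have hMk0 : Mk t₀ := (hmark t₀ ht₀T).mpr ⟨i₀, rfl, ⟨m, rfl⟩⟩
      have hall : ∀ j, Mk (t₀ + j * k) := by
        intro j
        induction j with
        | zero => simpa using hMk0
        | succ j ih =>
          have := step (t₀ + j * k) (by omega) ih
          rwa [show t₀ + j * k + k = t₀ + (j + 1) * k by ring] at this
      set r := m + k + 2 with hr
      set c := 2 ^ r with hc
      have hci₀ : i₀ ≤ c := Nat.pow_le_pow_right (by omega) (by omega)
      have hck : k + 2 ≤ c := le_trans (by have := Nat.lt_two_pow_self (n := r); omega) (le_refl _)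
      set a := start c with ha
      have ht₀a : t₀ ≤ a := hsmono.le_iff_le.mpr hci₀
      -- find a marker position in (a, a + k]
      set d := a - t₀ with hd
      set j₀ := d / k + 1 with hj₀
      have hdm : k * (d / k) + d % k = d := Nat.div_add_mod d k
      have hmod : d % k < k := Nat.mod_lt _ hkpos
      set t := t₀ + j₀ * k with htdef
      have hteq : t = t₀ + (d / k) * k + k := by rw [htdef, hj₀]; ring
      have hcm : k * (d / k) = (d / k) * k := Nat.mul_comm _ _
      have hta : a < t ∧ t ≤ a + k := by constructor <;> omega
      obtain ⟨i, hti, hSi⟩ := (hmark t (by omega)).mp (hall j₀)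
      -- i is strictly between c and 2 * c
      have hic : c < i := by
        by_contra hcon
        push_neg at hcon
        have : start i ≤ start c := hsmono.le_iff_le.mpr hcon
        omega
      have hi2c : i < c + c := by
        by_contra hcon
        push_neg at hcon
        have h1 : start (c + c) ≤ start i := hsmono.le_iff_le.mpr hcon
        have h2 : start c + c ≤ start (c + c) := haux c c
        omega
      obtain ⟨s, rfl⟩ := hSi
      have hrs : r < s := (Nat.pow_lt_pow_iff_right (by omega : 1 < 2)).mp hic
      have : 2 ^ (r + 1) ≤ 2 ^ s := Nat.pow_le_pow_right (by omega) (by omega)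
      rw [pow_succ] at this
      omega
    intro m n heq
    rcases lt_trichotomy m n with h | h | h
    · exact absurd heq (by intro hh; exact key m n h hh)
    · exact h
    · exact absurd heq.symm (by intro hh; exact key n m h hh)

/-- Non-eventually-periodic points are dense. -/
lemma dense_aperiodic {M : ℕ} {B : Fin M → Fin M → Bool} (hirr : IsIrreducibleMatrix B)
    (hnp : ¬ IsPermutationMatrix B) :
    Dense {y : MarkovShift B | ∀ m n : ℕ,
      (shiftMap B)^[m] y = (shiftMap B)^[n] y → m = n} := by
  intro y
  have hap := exists_aperiodic_approx hirr hnp y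
  choose z hz1 hz2 using hap
  apply mem_closure_of_tendsto (f := z) (b := Filter.atTop)
  · rw [Topology.IsEmbedding.subtypeVal.tendsto_nhds_iff, tendsto_pi_nhds]
    intro n
    apply Filter.Tendsto.congr' _ tendsto_const_nhds
    filter_upwards [Filter.eventually_ge_atTop n] with L hL
    exact (hz1 L n hL).symm
  · exact Filter.Eventually.of_forall (fun L => hz2 L)

/-- if `h` is a continuous orbit equivalence whose cocycle functions satisfy
`c₁ = 1 + b₁ − b₁∘σ_A` and `c₂ = 1 + b₂ − b₂∘σ_B` (strong continuous orbit equivalence),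
then `Φ_h(d^A)(y,φ) = d^B(y,φ) + b₂(y) − b₂(φ(y))` for all `(y,φ) ∈ X_B × Γ_B`; hence
`Φ_h([d^A]) = [d^B]` in `H¹(Γ_B, X_B; ℤ)`. -/
theorem PhiH_dA_eq_dB_add_coboundary {N M : ℕ}
    (A : Fin N → Fin N → Bool) (B : Fin M → Fin M → Bool)
    (hirrA : IsIrreducibleMatrix A) (hnpA : ¬ IsPermutationMatrix A)
    (hirrB : IsIrreducibleMatrix B) (hnpB : ¬ IsPermutationMatrix B)
    (h : MarkovShift A ≃ₜ MarkovShift B)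
    (k₁ l₁ : MarkovShift A → ℕ) (hk₁ : Continuous k₁) (hl₁ : Continuous l₁)
    (horb₁ : ∀ x, (shiftMap B)^[k₁ x] (h (shiftMap A x)) = (shiftMap B)^[l₁ x] (h x))
    (k₂ l₂ : MarkovShift B → ℕ) (hk₂ : Continuous k₂) (hl₂ : Continuous l₂)
    (horb₂ : ∀ y, (shiftMap A)^[k₂ y] (h.symm (shiftMap B y)) =
      (shiftMap A)^[l₂ y] (h.symm y))
    (b₁ : MarkovShift A → ℤ) (hb₁ : Continuous b₁)
    (hc₁ : ∀ x, (l₁ x : ℤ) - (k₁ x : ℤ) = 1 + b₁ x - b₁ (shiftMap A x))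
    (b₂ : MarkovShift B → ℤ) (hb₂ : Continuous b₂)
    (hc₂ : ∀ y, (l₂ y : ℤ) - (k₂ y : ℤ) = 1 + b₂ y - b₂ (shiftMap B y)) :
    ∀ (φ : FullGroupElt (shiftMap B)) (ψ : FullGroupElt (shiftMap A)),
      (∀ x, ψ.toHomeo x = h.symm (φ.toHomeo (h x))) →
      ∀ y, ((ψ.l (h.symm y) : ℤ) - (ψ.k (h.symm y) : ℤ)) =
        (((φ.l y : ℤ) - (φ.k y : ℤ)) + (b₂ y - b₂ (φ.toHomeo y))) := by
  intro φ ψ hconj y0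
  classical
  have comm : ∀ (a c : ℕ) (z : MarkovShift B),
      (shiftMap B)^[a] ((shiftMap B)^[c] z) = (shiftMap B)^[c] ((shiftMap B)^[a] z) := by
    intro a c z
    rw [← Function.iterate_add_apply, ← Function.iterate_add_apply, add_comm]
  have iter₁ := iterKey (shiftMap A) (shiftMap B) (⇑h) k₁ l₁ b₁ horb₁ hc₁
  have iter₂ := iterKey (shiftMap B) (shiftMap A) (⇑h.symm) k₂ l₂ b₂ horb₂ hc₂
  -- invariance of b₁ ∘ h⁻¹ + b₂ along orbits (at aperiodic points)
  have ginv : ∀ y' : MarkovShift B, (∀ m n : ℕ,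
      (shiftMap B)^[m] y' = (shiftMap B)^[n] y' → m = n) → ∀ n : ℕ,
      b₁ (h.symm y') + b₂ y' = b₁ (h.symm ((shiftMap B)^[n] y')) + b₂ ((shiftMap B)^[n] y') := by
    intro y' hy' n
    obtain ⟨K, Lr, E, Ar⟩ := iter₂ n y'
    obtain ⟨K', L', E', A'⟩ := iter₁ Lr (h.symm y')
    obtain ⟨K'', L'', E'', A''⟩ := iter₁ K (h.symm ((shiftMap B)^[n] y'))
    rw [h.apply_symm_apply] at E' E''
    rw [E] at E'' A''
    have comb : (shiftMap B)^[K'' + L'] y' = (shiftMap B)^[K' + (L'' + n)] y' := by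
      calc (shiftMap B)^[K'' + L'] y'
          = (shiftMap B)^[K''] ((shiftMap B)^[K'] (h ((shiftMap A)^[Lr] (h.symm y')))) := by
            rw [Function.iterate_add_apply, E']
        _ = (shiftMap B)^[K'] ((shiftMap B)^[K''] (h ((shiftMap A)^[Lr] (h.symm y')))) :=
            comm _ _ _
        _ = (shiftMap B)^[K'] ((shiftMap B)^[L''] ((shiftMap B)^[n] y')) := by rw [E'']
        _ = (shiftMap B)^[K' + (L'' + n)] y' := by
            rw [Function.iterate_add_apply, Function.iterate_add_apply]
    have hnat := hy' _ _ comb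
    have hcast : (K'' : ℤ) + L' = K' + (L'' + n) := by exact_mod_cast congrArg (Nat.cast : ℕ → ℤ) hnat
    linarith [Ar, A', A'', hcast]
  -- set up the two continuous functions
  set D : Set (MarkovShift B) :=
    {y | ∀ m n : ℕ, (shiftMap B)^[m] y = (shiftMap B)^[n] y → m = n} with hD
  have hdense : Dense D := dense_aperiodic hirrB hnpB
  set f : MarkovShift B → ℤ := fun y => (ψ.l (h.symm y) : ℤ) - ψ.k (h.symm y) with hfdef
  set g : MarkovShift B → ℤ :=
    fun y => ((φ.l y : ℤ) - φ.k y) + (b₂ y - b₂ (φ.toHomeo y)) with hgdef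
  have castc : Continuous (fun n : ℕ => (n : ℤ)) := continuous_of_discreteTopology
  have hf : Continuous f :=
    (castc.comp (ψ.cont_l.comp h.symm.continuous)).sub
      (castc.comp (ψ.cont_k.comp h.symm.continuous))
  have hg : Continuous g :=
    ((castc.comp φ.cont_l).sub (castc.comp φ.cont_k)).add
      (hb₂.sub (hb₂.comp φ.toHomeo.continuous))
  have heqon : Set.EqOn f g D := by
    intro y hy
    simp only [hD, Set.mem_setOf_eq] at hy
    -- aperiodicity of φ y
    have hyφ : ∀ m n : ℕ, (shiftMap B)^[m] (φ.toHomeo y) = (shiftMap B)^[n] (φ.toHomeo y) →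
        m = n := by
      intro m n hmn
      have h1 : (shiftMap B)^[m + φ.l y] y = (shiftMap B)^[n + φ.l y] y := by
        calc (shiftMap B)^[m + φ.l y] y
            = (shiftMap B)^[m] ((shiftMap B)^[φ.l y] y) := Function.iterate_add_apply _ _ _ _
          _ = (shiftMap B)^[m] ((shiftMap B)^[φ.k y] (φ.toHomeo y)) := by rw [φ.orbit]
          _ = (shiftMap B)^[φ.k y] ((shiftMap B)^[m] (φ.toHomeo y)) := comm _ _ _
          _ = (shiftMap B)^[φ.k y] ((shiftMap B)^[n] (φ.toHomeo y)) := by rw [hmn]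
          _ = (shiftMap B)^[n] ((shiftMap B)^[φ.k y] (φ.toHomeo y)) := comm _ _ _
          _ = (shiftMap B)^[n] ((shiftMap B)^[φ.l y] y) := by rw [φ.orbit]
          _ = (shiftMap B)^[n + φ.l y] y := (Function.iterate_add_apply _ _ _ _).symm
      have := hy _ _ h1
      omega
    set x := h.symm y with hxdef
    have hx : h x = y := h.apply_symm_apply y
    have hψx2 : ψ.toHomeo x = h.symm (φ.toHomeo y) := by rw [hconj x, hx]
    have hψx : h (ψ.toHomeo x) = φ.toHomeo y := by rw [hψx2, h.apply_symm_apply]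
    obtain ⟨Kl, Ll, El, Al⟩ := iter₁ (ψ.l x) x
    obtain ⟨Kk, Lk, Ek, Ak⟩ := iter₁ (ψ.k x) (ψ.toHomeo x)
    rw [ψ.orbit x] at Ek Ak
    rw [hψx] at Ek
    rw [hx] at El
    have comb : (shiftMap B)^[φ.k y + (Kk + Ll)] y = (shiftMap B)^[(Kl + Lk) + φ.l y] y := by
      calc (shiftMap B)^[φ.k y + (Kk + Ll)] y
          = (shiftMap B)^[φ.k y] ((shiftMap B)^[Kk] ((shiftMap B)^[Ll] y)) := by
            rw [Function.iterate_add_apply, Function.iterate_add_apply]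
        _ = (shiftMap B)^[φ.k y] ((shiftMap B)^[Kk]
              ((shiftMap B)^[Kl] (h ((shiftMap A)^[ψ.l x] x)))) := by rw [El]
        _ = (shiftMap B)^[φ.k y] ((shiftMap B)^[Kl]
              ((shiftMap B)^[Kk] (h ((shiftMap A)^[ψ.l x] x)))) := by rw [comm Kk Kl]
        _ = (shiftMap B)^[φ.k y] ((shiftMap B)^[Kl] ((shiftMap B)^[Lk] (φ.toHomeo y))) := by
            rw [Ek]
        _ = (shiftMap B)^[Kl] ((shiftMap B)^[φ.k y] ((shiftMap B)^[Lk] (φ.toHomeo y))) :=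
            comm _ _ _
        _ = (shiftMap B)^[Kl] ((shiftMap B)^[Lk] ((shiftMap B)^[φ.k y] (φ.toHomeo y))) := by
            rw [comm (φ.k y) Lk]
        _ = (shiftMap B)^[Kl] ((shiftMap B)^[Lk] ((shiftMap B)^[φ.l y] y)) := by rw [φ.orbit]
        _ = (shiftMap B)^[(Kl + Lk) + φ.l y] y := by
            rw [Function.iterate_add_apply, Function.iterate_add_apply]
    have hnat := hy _ _ comb
    have hcast : (φ.k y : ℤ) + (Kk + Ll) = (Kl + Lk) + φ.l y := by
      exact_mod_cast congrArg (Nat.cast : ℕ → ℤ) hnat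
    -- invariance gives b₁ (ψ x) + b₂ (φ y) = b₁ x + b₂ y
    have e1 := ginv y hy (φ.l y)
    have e2 := ginv (φ.toHomeo y) hyφ (φ.k y)
    rw [φ.orbit y] at e2
    rw [← hψx2] at e2
    -- conclude
    show (ψ.l x : ℤ) - ψ.k x = ((φ.l y : ℤ) - φ.k y) + (b₂ y - b₂ (φ.toHomeo y))
    linarith [Al, Ak, hcast, e1, e2]
  have := Continuous.ext_on hdense hf hg heqon
  exact congrFun this y0
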